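/- Let A be a complex M×N matrix, Y a complex M×L matrix, and μ > 0. A complex N×L matrix X̂ is a global minimizer of the multiple-snapshot objective G(X) = ‖Y − A X‖_F² + μ·Σᵢ ‖Xᵢ·‖₂ if and only if the beamformed residual matrix R = 2·Aᴴ(Y − A X̂) satisfies, for every row index i: if the i-th row X̂ᵢ· is nonzero then Rᵢ· = μ·X̂ᵢ·/‖X̂ᵢ·‖₂, and if X̂ᵢ· = 0 then ‖Rᵢ·‖₂ ≤ μ. -/

import Mathlib

open Matrix
set_option maxHeartbeats 1000000

/-- The multiple-snapshot (mixed-norm) LASSO objective ‖Y − A X‖_F² + μ Σᵢ ‖Xᵢ·‖₂. -/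
noncomputable def msObj {M N L : ℕ} (A : Matrix (Fin M) (Fin N) ℂ)
    (Y : Matrix (Fin M) (Fin L) ℂ) (μ : ℝ) (X : Matrix (Fin N) (Fin L) ℂ) : ℝ :=
  (∑ i, ∑ j, ‖(Y - A * X) i j‖ ^ 2) + μ * ∑ i, Real.sqrt (∑ j, ‖X i j‖ ^ 2)

/-- The beamformed residual matrix `R = 2 Aᴴ (Y − A X̂)`. -/
noncomputable def msRes {M N L : ℕ} (A : Matrix (Fin M) (Fin N) ℂ)
    (Y : Matrix (Fin M) (Fin L) ℂ) (Xhat : Matrix (Fin N) (Fin L) ℂ) :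
    Matrix (Fin N) (Fin L) ℂ :=
  (2 : ℂ) • (Aᴴ * (Y - A * Xhat))

section MSAux
variable {L : ℕ}

noncomputable def msNsq (u : Fin L → ℂ) : ℝ := ∑ j, ‖u j‖^2
noncomputable def msNrm (u : Fin L → ℂ) : ℝ := Real.sqrt (msNsq u)
noncomputable def msRip (u v : Fin L → ℂ) : ℝ := ∑ j, ((starRingEnd ℂ (u j)) * v j).re

lemma msNsq_nonneg (u : Fin L → ℂ) : 0 ≤ msNsq u :=
  Finset.sum_nonneg fun _ _ => by positivity

lemma msNrm_nonneg (u : Fin L → ℂ) : 0 ≤ msNrm u := Real.sqrt_nonneg _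

lemma msNrm_sq (u : Fin L → ℂ) : msNrm u ^ 2 = msNsq u := Real.sq_sqrt (msNsq_nonneg u)

lemma msRip_self (u : Fin L → ℂ) : msRip u u = msNsq u := by
  unfold msRip msNsq
  refine Finset.sum_congr rfl fun j _ => ?_
  rw [← Complex.normSq_eq_conj_mul_self]
  simp [← Complex.sq_norm, Complex.normSq_apply, Complex.sq_norm]

lemma msNsq_eq_zero {u : Fin L → ℂ} (h : msNsq u ≤ 0) : u = 0 := by
  have h2 : ∀ j ∈ Finset.univ, ‖u j‖^2 = 0 := by
    intro j _
    have := (Finset.sum_eq_zero_iff_of_nonneg (fun j _ => by positivity)).mp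
      (le_antisymm h (msNsq_nonneg u))
    exact this j (Finset.mem_univ j)
  funext j
  have := h2 j (Finset.mem_univ j)
  simpa using pow_eq_zero_iff (n := 2) (by norm_num) |>.mp this

lemma msNrm_pos {u : Fin L → ℂ} (h : u ≠ 0) : 0 < msNrm u := by
  rcases lt_or_ge 0 (msNsq u) with hp | hn
  · exact Real.sqrt_pos.mpr hp
  · exact absurd (msNsq_eq_zero hn) h

lemma msRip_cs (u v : Fin L → ℂ) : msRip u v ≤ msNrm u * msNrm v := by
  have h1 : msRip u v ≤ ∑ j, ‖u j‖ * ‖v j‖ := by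
    refine Finset.sum_le_sum fun j _ => ?_
    calc ((starRingEnd ℂ (u j)) * v j).re ≤ ‖(starRingEnd ℂ (u j)) * v j‖ :=
          Complex.re_le_norm _
      _ = ‖u j‖ * ‖v j‖ := by rw [norm_mul]; simp
  have h2 : (∑ j, ‖u j‖ * ‖v j‖)^2 ≤ (∑ j, ‖u j‖^2) * (∑ j, ‖v j‖^2) :=
    Finset.sum_mul_sq_le_sq_mul_sq Finset.univ _ _
  have h3 : ∑ j, ‖u j‖ * ‖v j‖ ≤ msNrm u * msNrm v := by
    have hnn : (0:ℝ) ≤ ∑ j, ‖u j‖ * ‖v j‖ :=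
      Finset.sum_nonneg fun j _ => mul_nonneg (norm_nonneg _) (norm_nonneg _)
    have := Real.sqrt_le_sqrt h2
    rwa [Real.sqrt_sq hnn, Real.sqrt_mul (by positivity)] at this
  linarith

lemma msRip_add_left (u u' v : Fin L → ℂ) :
    msRip (fun j => u j + u' j) v = msRip u v + msRip u' v := by
  unfold msRip
  rw [← Finset.sum_add_distrib]
  refine Finset.sum_congr rfl fun j _ => ?_
  simp [add_mul]

lemma msRip_smul_left (r : ℝ) (u v : Fin L → ℂ) :
    msRip (fun j => (r:ℂ) * u j) v = r * msRip u v := by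
  unfold msRip
  rw [Finset.mul_sum]
  refine Finset.sum_congr rfl fun j _ => ?_
  simp only []
  rw [RingHom.map_mul, Complex.conj_ofReal, mul_assoc, Complex.re_ofReal_mul]

lemma msRip_smul_right (r : ℝ) (u v : Fin L → ℂ) :
    msRip u (fun j => (r:ℂ) * v j) = r * msRip u v := by
  unfold msRip
  rw [Finset.mul_sum]
  refine Finset.sum_congr rfl fun j _ => ?_
  simp only []
  rw [show (starRingEnd ℂ) (u j) * ((r:ℂ) * v j) = (r:ℂ) * ((starRingEnd ℂ) (u j) * v j) by ring,
    Complex.re_ofReal_mul]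

lemma msRip_sub_right (u v w : Fin L → ℂ) :
    msRip u (fun j => v j - w j) = msRip u v - msRip u w := by
  unfold msRip
  rw [← Finset.sum_sub_distrib]
  refine Finset.sum_congr rfl fun j _ => ?_
  simp [mul_sub]

lemma msNsq_add (u v : Fin L → ℂ) :
    msNsq (fun j => u j + v j) = msNsq u + 2 * msRip u v + msNsq v := by
  unfold msNsq msRip
  rw [Finset.mul_sum, ← Finset.sum_add_distrib, ← Finset.sum_add_distrib]
  refine Finset.sum_congr rfl fun j _ => ?_
  have e : ∀ z : ℂ, ‖z‖^2 = Complex.normSq z := fun z => by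
    rw [Complex.sq_norm]
  rw [e, e, e, Complex.normSq_add]
  have : ((starRingEnd ℂ) (u j) * v j).re = (u j * (starRingEnd ℂ) (v j)).re := by
    rw [show (starRingEnd ℂ) (u j) * v j = (starRingEnd ℂ) (u j * (starRingEnd ℂ) (v j)) by
      simp [RingHom.map_mul], Complex.conj_re]
  rw [this]; ring

lemma msNsq_smul (r : ℝ) (u : Fin L → ℂ) :
    msNsq (fun j => (r:ℂ) * u j) = r^2 * msNsq u := by
  unfold msNsq
  rw [Finset.mul_sum]
  refine Finset.sum_congr rfl fun j _ => ?_
  rw [norm_mul, mul_pow, Complex.norm_real, Real.norm_eq_abs, sq_abs]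

lemma msNrm_smul (r : ℝ) (hr : 0 ≤ r) (u : Fin L → ℂ) :
    msNrm (fun j => (r:ℂ) * u j) = r * msNrm u := by
  unfold msNrm
  rw [msNsq_smul, Real.sqrt_mul (by positivity), Real.sqrt_sq hr]

lemma msNrm_add_le (u v : Fin L → ℂ) (hu : u ≠ 0) :
    msNrm (fun j => u j + v j) ≤ msNrm u + (2 * msRip u v + msNsq v) / (2 * msNrm u) := by
  set a := msNrm u with ha
  have hapos : 0 < a := msNrm_pos hu
  set d := 2 * msRip u v + msNsq v with hd
  have h1 : msNsq (fun j => u j + v j) = a^2 + d := by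
    rw [msNsq_add, msNrm_sq]; ring
  have hnn : 0 ≤ a^2 + d := h1 ▸ msNsq_nonneg _
  have hrhs : 0 ≤ a + d / (2*a) := by
    have heq : a + d/(2*a) = (a^2 + (a^2 + d))/(2*a) := by field_simp; ring
    rw [heq]
    have h2 : 0 ≤ a^2 + (a^2+d) := by positivity
    positivity
  have hsq : a^2 + d ≤ (a + d/(2*a))^2 := by
    have : (a + d/(2*a))^2 = a^2 + d + (d/(2*a))^2 := by field_simp; ring
    nlinarith [sq_nonneg (d/(2*a))]
  calc msNrm (fun j => u j + v j) = Real.sqrt (a^2 + d) := by rw [msNrm, h1]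
    _ ≤ Real.sqrt ((a + d/(2*a))^2) := Real.sqrt_le_sqrt hsq
    _ = a + d/(2*a) := Real.sqrt_sq hrhs

lemma msSmall_t (a b : ℝ) (hb : 0 ≤ b) (h : ∀ t : ℝ, 0 < t → a ≤ b * t) : a ≤ 0 := by
  by_contra hc
  push_neg at hc
  have ht : (0:ℝ) < a / (2*(b+1)) := by positivity
  have := h _ ht
  have hb1 : b / (2*(b+1)) < 1 := by
    rw [div_lt_one (by positivity)]; linarith
  have : a ≤ a * (b / (2*(b+1))) := by
    calc a ≤ b * (a / (2*(b+1))) := this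
      _ = a * (b / (2*(b+1))) := by ring
  nlinarith



lemma msRip_zero_right (u : Fin L → ℂ) : msRip u (fun _ => 0) = 0 := by
  simp [msRip]

lemma msRip_zero_right' (u : Fin L → ℂ) : msRip u 0 = 0 := by
  simp [msRip]

lemma msNrm_zero' : msNrm (0 : Fin L → ℂ) = 0 := by
  simp [msNrm, msNsq]

lemma msRip_comm (u v : Fin L → ℂ) : msRip u v = msRip v u := by
  unfold msRip
  refine Finset.sum_congr rfl fun j _ => ?_
  rw [show (starRingEnd ℂ) (v j) * u j = (starRingEnd ℂ) ((starRingEnd ℂ) (u j) * v j) by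
    simp [RingHom.map_mul]; ring, Complex.conj_re]

end MSAux

section MSMat
variable {M N L : ℕ}

lemma msTrace {m l : ℕ} (P Q : Matrix (Fin m) (Fin l) ℂ) :
    ∑ a, ∑ b, (starRingEnd ℂ) (P a b) * Q a b = Matrix.trace (Pᴴ * Q) := by
  rw [Matrix.trace]
  simp only [Matrix.diag_apply, Matrix.mul_apply, Matrix.conjTranspose_apply]
  rw [Finset.sum_comm]
  rfl

lemma msSwap (A : Matrix (Fin M) (Fin N) ℂ) (E : Matrix (Fin M) (Fin L) ℂ)
    (D : Matrix (Fin N) (Fin L) ℂ) :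
    ∑ m, ∑ j, (starRingEnd ℂ) (E m j) * ((A*D) m j)
      = ∑ i, ∑ j, (starRingEnd ℂ) ((Aᴴ*E) i j) * D i j := by
  rw [msTrace, msTrace, show Eᴴ*(A*D) = (Aᴴ*E)ᴴ*D by
    rw [conjTranspose_mul, conjTranspose_conjTranspose, Matrix.mul_assoc]]

lemma msFid (A : Matrix (Fin M) (Fin N) ℂ) (Y : Matrix (Fin M) (Fin L) ℂ)
    (Xhat D : Matrix (Fin N) (Fin L) ℂ) :
    ∑ m, ∑ j, ‖(Y - A*(Xhat + D)) m j‖^2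
      = (∑ m, ∑ j, ‖(Y - A*Xhat) m j‖^2)
        - (∑ i, ∑ j, ((starRingEnd ℂ) ((((2:ℂ) • (Aᴴ*(Y - A*Xhat))) : Matrix (Fin N) (Fin L) ℂ) i j) * D i j).re)
        + ∑ m, ∑ j, ‖(A*D) m j‖^2 := by
  set E := Y - A*Xhat with hE
  have hmat : Y - A*(Xhat+D) = E - A*D := by rw [Matrix.mul_add, hE]; abel
  rw [hmat]
  have hpt : ∀ m j, ‖(E - A*D) m j‖^2
      = ‖E m j‖^2 - 2*(((starRingEnd ℂ) (E m j)) * (A*D) m j).re + ‖(A*D) m j‖^2 := by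
    intro m j
    simp only [Matrix.sub_apply]
    simp [← Complex.sq_norm, Complex.sq_norm, Complex.normSq_apply, Complex.normSq_sub]
    ring
  have hsplit : ∑ m, ∑ j, ‖(E - A*D) m j‖^2
      = (∑ m, ∑ j, ‖E m j‖^2)
        - 2 * (∑ m, ∑ j, (((starRingEnd ℂ) (E m j)) * (A*D) m j).re)
        + ∑ m, ∑ j, ‖(A*D) m j‖^2 := by
    simp only [hpt]
    rw [Finset.mul_sum]
    rw [← Finset.sum_sub_distrib, ← Finset.sum_add_distrib]
    refine Finset.sum_congr rfl fun m _ => ?_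
    rw [Finset.mul_sum, ← Finset.sum_sub_distrib, ← Finset.sum_add_distrib]
  rw [hsplit]
  have hre : ∑ m, ∑ j, (((starRingEnd ℂ) (E m j)) * (A*D) m j).re
      = ∑ i, ∑ j, (((starRingEnd ℂ) ((Aᴴ*E) i j)) * D i j).re := by
    have := msSwap A E D
    have h1 : (∑ m, ∑ j, (starRingEnd ℂ) (E m j) * ((A*D) m j)).re
        = (∑ i, ∑ j, (starRingEnd ℂ) ((Aᴴ*E) i j) * D i j).re := by rw [this]
    simpa [Complex.re_sum] using h1
  have hres : ∑ i, ∑ j, (((starRingEnd ℂ) ((((2:ℂ) • (Aᴴ*E)) : Matrix (Fin N) (Fin L) ℂ) i j)) * D i j).re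
      = 2 * ∑ i, ∑ j, (((starRingEnd ℂ) ((Aᴴ*E) i j)) * D i j).re := by
    rw [Finset.mul_sum]
    refine Finset.sum_congr rfl fun i _ => ?_
    rw [Finset.mul_sum]
    refine Finset.sum_congr rfl fun j _ => ?_
    simp only [Matrix.smul_apply, smul_eq_mul, RingHom.map_mul]
    rw [show (starRingEnd ℂ) 2 * (starRingEnd ℂ) ((Aᴴ*E) i j) * D i j
        = (2:ℂ) * ((starRingEnd ℂ) ((Aᴴ*E) i j) * D i j) by
      simp [Complex.conj_ofNat]; ring]
    simp
  rw [hre, hres]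

end MSMat

section MSMain
variable {M N L : ℕ}

lemma msObj_expand (A : Matrix (Fin M) (Fin N) ℂ) (Y : Matrix (Fin M) (Fin L) ℂ)
    (μ : ℝ) (Xhat D : Matrix (Fin N) (Fin L) ℂ) :
    msObj A Y μ (Xhat + D) = msObj A Y μ Xhat
      - (∑ i, msRip (msRes A Y Xhat i) (D i))
      + (∑ m, ∑ j, ‖(A*D) m j‖^2)
      + μ * ((∑ i, msNrm ((Xhat + D) i)) - ∑ i, msNrm (Xhat i)) := by
  have hfid := msFid A Y Xhat D
  unfold msObj msNrm msNsq msRip msRes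
  rw [hfid]
  ring

end MSMain

/-- Global optimality condition for the multiple-snapshot LASSO: `X̂` minimizes the
objective iff `Rᵢ· = μ X̂ᵢ·/‖X̂ᵢ·‖₂` on nonzero rows and `‖Rᵢ·‖₂ ≤ μ` on zero rows. -/
theorem ms_optimality_iff {M N L : ℕ} (A : Matrix (Fin M) (Fin N) ℂ)
    (Y : Matrix (Fin M) (Fin L) ℂ) (μ : ℝ) (hμ : 0 < μ) (Xhat : Matrix (Fin N) (Fin L) ℂ) :
    (∀ X : Matrix (Fin N) (Fin L) ℂ, msObj A Y μ Xhat ≤ msObj A Y μ X) ↔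
      (∀ i : Fin N,
        (Xhat i ≠ 0 →
          msRes A Y Xhat i = (μ / Real.sqrt (∑ j, ‖Xhat i j‖ ^ 2)) • Xhat i) ∧
        (Xhat i = 0 → Real.sqrt (∑ j, ‖msRes A Y Xhat i j‖ ^ 2) ≤ μ)) := by
  set R := msRes A Y Xhat with hR
  constructor
  · -- forward direction
    intro hmin i
    set c := ∑ m, ‖A m i‖^2 with hc
    have hcnn : 0 ≤ c := Finset.sum_nonneg fun _ _ => by positivity
    -- key inequality from minimality along row-i perturbations
    have hkey : ∀ (t : ℝ) (v : Fin L → ℂ),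
        0 ≤ -(t * msRip (R i) v) + t^2 * (c * msNsq v)
          + μ * (msNrm (fun j => Xhat i j + (t:ℂ) * v j) - msNrm (Xhat i)) := by
      intro t v
      set Dm : Matrix (Fin N) (Fin L) ℂ := fun n j => if n = i then (t:ℂ) * v j else 0 with hDm
      have h0 := hmin (Xhat + Dm)
      rw [msObj_expand A Y μ Xhat Dm] at h0
      have p1 : (∑ i', msRip (R i') (Dm i')) = t * msRip (R i) v := by
        rw [Finset.sum_eq_single i]
        · have : Dm i = fun j => (t:ℂ) * v j := by funext j; simp [hDm]
          rw [this, msRip_smul_right]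
        · intro i' _ hne
          have : Dm i' = fun _ => 0 := by funext j; simp [hDm, hne]
          rw [this, msRip_zero_right]
        · intro h; exact absurd (Finset.mem_univ i) h
      have p2 : (∑ m, ∑ j, ‖(A*Dm) m j‖^2) = t^2 * (c * msNsq v) := by
        have hAD : ∀ m j, (A*Dm) m j = (t:ℂ) * (A m i * v j) := by
          intro m j
          rw [Matrix.mul_apply]
          rw [Finset.sum_eq_single i]
          · simp [hDm]; ring
          · intro n _ hne; simp [hDm, hne]
          · intro h; exact absurd (Finset.mem_univ i) h
        have hterm : ∀ m j, ‖(A*Dm) m j‖^2 = t^2 * (‖A m i‖^2 * ‖v j‖^2) := by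
          intro m j
          rw [hAD m j, norm_mul, norm_mul, Complex.norm_real, Real.norm_eq_abs]
          rw [mul_pow, mul_pow, sq_abs]
        calc ∑ m, ∑ j, ‖(A*Dm) m j‖^2 = ∑ m, ∑ j, t^2 * (‖A m i‖^2 * ‖v j‖^2) := by
              exact Finset.sum_congr rfl fun m _ => Finset.sum_congr rfl fun j _ => hterm m j
          _ = ∑ m, t^2 * ‖A m i‖^2 * msNsq v := by
              refine Finset.sum_congr rfl fun m _ => ?_
              rw [msNsq, Finset.mul_sum]
              exact Finset.sum_congr rfl fun j _ => by ring
          _ = t^2 * (c * msNsq v) := by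
              rw [hc, Finset.sum_mul, Finset.mul_sum]
              exact Finset.sum_congr rfl fun m _ => by ring
      have p3 : (∑ i', msNrm ((Xhat + Dm) i')) - ∑ i', msNrm (Xhat i')
          = msNrm (fun j => Xhat i j + (t:ℂ) * v j) - msNrm (Xhat i) := by
        rw [← Finset.sum_sub_distrib]
        rw [Finset.sum_eq_single i]
        · have : (Xhat + Dm) i = fun j => Xhat i j + (t:ℂ) * v j := by
            funext j; rw [Matrix.add_apply]; simp [hDm, Matrix.add_apply]
          rw [this]
        · intro i' _ hne
          have : (Xhat + Dm) i' = Xhat i' := by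
            funext j; rw [Matrix.add_apply]; simp [hDm, Matrix.add_apply, hne]
          rw [this, sub_self]
        · intro h; exact absurd (Finset.mem_univ i) h
      rw [p1, p2, p3] at h0
      linarith
    constructor
    · -- nonzero row
      intro hne
      set a := msNrm (Xhat i) with ha
      have hapos : 0 < a := msNrm_pos hne
      set w : Fin L → ℂ := fun j => R i j - ((μ/a : ℝ):ℂ) * Xhat i j with hw
      have hRiw : msRip (R i) w = msNsq w + (μ/a) * msRip (Xhat i) w := by
        have hRi : R i = fun j => w j + ((μ/a : ℝ):ℂ) * Xhat i j := by
          funext j; simp [hw]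
        rw [show msRip (R i) w = msRip (fun j => w j + ((μ/a : ℝ):ℂ) * Xhat i j) w by rw [← hRi]]
        rw [msRip_add_left, msRip_smul_left, msRip_self]
      set p := msRip (Xhat i) w with hp
      have hbig : ∀ t : ℝ, 0 < t → msNsq w ≤ (c * msNsq w + (μ/a) * msNsq w / 2) * t := by
        intro t ht
        have hk := hkey t w
        have hbound : msNrm (fun j => Xhat i j + (t:ℂ) * w j)
            ≤ a + (2 * (t * p) + t^2 * msNsq w) / (2 * a) := by
          have h1 := msNrm_add_le (Xhat i) (fun j => (t:ℂ) * w j) hne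
          rw [msRip_smul_right, msNsq_smul] at h1
          exact h1
        have heq : μ * ((2 * (t * p) + t^2 * msNsq w) / (2 * a))
            = (μ/a) * t * p + (μ/a) * t^2 * msNsq w / 2 := by
          field_simp
        have hmono : μ * (msNrm (fun j => Xhat i j + (t:ℂ) * w j) - a)
            ≤ (μ/a) * t * p + (μ/a) * t^2 * msNsq w / 2 - μ * 0 := by
          rw [← heq]
          nlinarith [hbound]
        rw [hRiw] at hk
        have h2 : t * msNsq w ≤ t * ((c * msNsq w + (μ/a) * msNsq w / 2) * t) := by
          linarith [hk, hmono]
        exact le_of_mul_le_mul_left h2 ht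

      have hwz : msNsq w ≤ 0 := by
        apply msSmall_t _ _ _ hbig
        have : 0 ≤ (μ/a) := le_of_lt (div_pos hμ hapos)
        have := msNsq_nonneg w
        positivity
      have hw0 : w = 0 := msNsq_eq_zero hwz
      funext j
      have hj : w j = 0 := congrFun hw0 j
      rw [hw] at hj
      simp only [sub_eq_zero] at hj
      show R i j = ((μ / Real.sqrt (∑ j, ‖Xhat i j‖ ^ 2)) • Xhat i) j
      rw [Pi.smul_apply]
      rw [show (μ / Real.sqrt (∑ j, ‖Xhat i j‖ ^ 2)) • Xhat i j
          = ((μ / Real.sqrt (∑ j, ‖Xhat i j‖ ^ 2) : ℝ):ℂ) * Xhat i j from Complex.real_smul]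
      exact hj
    · -- zero row
      intro hz
      show msNrm (R i) ≤ μ
      have hkey2 : ∀ t : ℝ, 0 < t →
          msNsq (R i) - μ * msNrm (R i) ≤ (c * msNsq (R i)) * t := by
        intro t ht
        have hk := hkey t (R i)
        have harg : (fun j => Xhat i j + (t:ℂ) * R i j) = fun j => (t:ℂ) * R i j := by
          funext j
          rw [show Xhat i j = 0 from congrFun hz j, zero_add]
        rw [harg, msNrm_smul t ht.le, msRip_self] at hk
        rw [show msNrm (Xhat i) = 0 from by rw [hz]; exact msNrm_zero'] at hk
        have h2 : t * (msNsq (R i) - μ * msNrm (R i)) ≤ t * ((c * msNsq (R i)) * t) := by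
          linarith [hk]
        exact le_of_mul_le_mul_left h2 ht
      have h3 : msNsq (R i) - μ * msNrm (R i) ≤ 0 := by
        apply msSmall_t _ _ _ hkey2
        have := msNsq_nonneg (R i)
        positivity
      have h4 : msNrm (R i) ^ 2 ≤ μ * msNrm (R i) := by rw [msNrm_sq]; linarith
      rcases eq_or_lt_of_le (msNrm_nonneg (R i)) with h5 | h5
      · rw [← h5]; exact hμ.le
      · nlinarith
  · -- reverse direction
    intro hcond X
    set D : Matrix (Fin N) (Fin L) ℂ := X - Xhat with hD
    have hXD : Xhat + D = X := by rw [hD, add_comm, sub_add_cancel]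
    rw [← hXD, msObj_expand A Y μ Xhat D, ← hR]
    have hQ : 0 ≤ ∑ m, ∑ j, ‖(A*D) m j‖^2 :=
      Finset.sum_nonneg fun m _ => Finset.sum_nonneg fun j _ => by positivity
    have hrow : ∀ i : Fin N, msRip (R i) (D i) ≤ μ * (msNrm ((Xhat + D) i) - msNrm (Xhat i)) := by
      intro i
      have hDi : D i = fun j => X i j - Xhat i j := rfl
      have hXi : (Xhat + D) i = X i := by rw [hXD]
      rw [hXi, hDi, msRip_sub_right]
      rcases hcond i with ⟨h1, h2⟩
      by_cases hz : Xhat i = 0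
      · have hz1 : msRip (R i) (Xhat i) = 0 := by
          rw [hz]; exact msRip_zero_right' _
        have hz2 : msNrm (Xhat i) = 0 := by rw [hz]; exact msNrm_zero'
        have hcs : msRip (R i) (X i) ≤ msNrm (R i) * msNrm (X i) := msRip_cs _ _
        have hle : msNrm (R i) ≤ μ := h2 hz
        have : msNrm (R i) * msNrm (X i) ≤ μ * msNrm (X i) :=
          mul_le_mul_of_nonneg_right hle (msNrm_nonneg _)
        rw [hz1, hz2]
        linarith
      · have hRs : R i = fun j => ((μ / msNrm (Xhat i) : ℝ):ℂ) * Xhat i j := by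
          funext j
          have h3 := congrFun (h1 hz) j
          rw [h3, Pi.smul_apply]
          exact Complex.real_smul
        have hapos : 0 < msNrm (Xhat i) := msNrm_pos hz
        set a := msNrm (Xhat i) with ha
        rw [hRs, msRip_smul_left, msRip_smul_left, msRip_self]
        have hcs : msRip (Xhat i) (X i) ≤ a * msNrm (X i) := msRip_cs _ _
        have hnsq : msNsq (Xhat i) = a^2 := (msNrm_sq _).symm
        rw [hnsq]
        have hqa : 0 < μ / a := div_pos hμ hapos
        have e1 : μ / a * msRip (Xhat i) (X i) ≤ μ * msNrm (X i) := by
          calc μ / a * msRip (Xhat i) (X i) ≤ μ / a * (a * msNrm (X i)) :=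
                mul_le_mul_of_nonneg_left hcs hqa.le
            _ = μ * msNrm (X i) := by field_simp
        have e2 : μ / a * a^2 = μ * a := by field_simp
        rw [e2]
        linarith
    have hsum : ∑ i, msRip (R i) (D i)
        ≤ μ * ((∑ i, msNrm ((Xhat + D) i)) - ∑ i, msNrm (Xhat i)) := by
      calc ∑ i, msRip (R i) (D i) ≤ ∑ i, μ * (msNrm ((Xhat + D) i) - msNrm (Xhat i)) :=
            Finset.sum_le_sum fun i _ => hrow i
        _ = μ * ((∑ i, msNrm ((Xhat + D) i)) - ∑ i, msNrm (Xhat i)) := by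
            rw [← Finset.sum_sub_distrib, Finset.mul_sum]
    linarith
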